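/- Define $g(a) = a^3 \mathbf{1}_{0 \leq a \leq 1} + a^2 \mathbf{1}_{a > 1}$ and $\Psi(a) = \int_0^a \sqrt{((1+s)\ln(1+s)-s)/(1+s)}\, ds$. There exists a constant $C > 0$ such that $g(a)\ln(1+a) \leq C\,|\Psi(a)|^2$ for all $a \geq 0$. -/

import Mathlib

open Real intervalIntegral

lemma entropy_lb (s : ℝ) (hs : 0 ≤ s) :
    s / 2 * Real.log (1 + s / 2) ≤ (1 + s) * Real.log (1 + s) - s := by
  have h1 : (0:ℝ) < 1 + s / 2 := by linarith
  have h2 : (0:ℝ) < 1 + s := by linarith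
  have hid : (1 + s) * Real.log (1 + s) - s = ∫ u in (1:ℝ)..(1 + s), Real.log u := by
    rw [integral_log]
    simp [Real.log_one]; ring
  rw [hid]
  have hint1 : IntervalIntegrable Real.log MeasureTheory.volume 1 (1 + s / 2) :=
    intervalIntegrable_log (Set.notMem_uIcc_of_lt one_pos h1)
  have hint2 : IntervalIntegrable Real.log MeasureTheory.volume (1 + s / 2) (1 + s) :=
    intervalIntegrable_log (Set.notMem_uIcc_of_lt h1 h2)
  rw [← integral_add_adjacent_intervals hint1 hint2]
  have hA : (0:ℝ) ≤ ∫ u in (1:ℝ)..(1 + s / 2), Real.log u := by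
    apply integral_nonneg (by linarith)
    intro u hu
    exact Real.log_nonneg (by linarith [hu.1])
  have hB : s / 2 * Real.log (1 + s / 2) ≤ ∫ u in (1 + s / 2)..(1 + s), Real.log u := by
    have := integral_mono_on (f := fun _ => Real.log (1 + s / 2)) (g := Real.log)
      (a := 1 + s / 2) (b := 1 + s) (μ := MeasureTheory.volume)
      (by linarith) intervalIntegrable_const hint2
      (fun x hx => Real.log_le_log h1 hx.1)
    rw [integral_const] at this
    calc s / 2 * Real.log (1 + s / 2)
        = ((1 + s) - (1 + s / 2)) • Real.log (1 + s / 2) := by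
          simp only [smul_eq_mul]; ring
      _ ≤ _ := this
  linarith

lemma key_bound (a : ℝ) (ha : 0 ≤ a) :
    (0 ≤ ∫ s in (0:ℝ)..a, Real.sqrt (((1 + s) * Real.log (1 + s) - s) / (1 + s))) ∧
    a ^ 3 * Real.log (1 + a)
      ≤ 64 * (1 + a) *
        (∫ s in (0:ℝ)..a, Real.sqrt (((1 + s) * Real.log (1 + s) - s) / (1 + s))) ^ 2 := by
  set f : ℝ → ℝ := fun s => Real.sqrt (((1 + s) * Real.log (1 + s) - s) / (1 + s)) with hf
  have hfc : ContinuousOn f (Set.Ici (0:ℝ)) := by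
    apply ContinuousOn.sqrt
    apply ContinuousOn.div
    · exact ((continuousOn_const.add continuousOn_id).mul
        ((continuousOn_const.add continuousOn_id).log
          (fun x hx => by have hx0 : (0:ℝ) ≤ x := hx; show (1:ℝ) + x ≠ 0; positivity))).sub continuousOn_id
    · exact continuousOn_const.add continuousOn_id
    · intro x hx; have hx0 : (0:ℝ) ≤ x := hx; positivity
  have hsub1 : Set.uIcc (0:ℝ) (a/2) ⊆ Set.Ici (0:ℝ) := by
    rw [Set.uIcc_of_le (by linarith)]; exact fun x hx => hx.1
  have hsub2 : Set.uIcc (a/2) a ⊆ Set.Ici (0:ℝ) := by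
    rw [Set.uIcc_of_le (by linarith)]; intro x hx; exact le_trans (by linarith) hx.1
  have hint1 : IntervalIntegrable f MeasureTheory.volume 0 (a/2) :=
    (hfc.mono hsub1).intervalIntegrable
  have hint2 : IntervalIntegrable f MeasureTheory.volume (a/2) a :=
    (hfc.mono hsub2).intervalIntegrable
  set q : ℝ := a / 4 * Real.log (1 + a / 4) / (1 + a) with hq
  have hNnn : 0 ≤ a / 4 * Real.log (1 + a / 4) :=
    mul_nonneg (by linarith) (Real.log_nonneg (by linarith))
  have hqnn : 0 ≤ q := div_nonneg hNnn (by linarith)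
  have hlow : ∀ x ∈ Set.Icc (a/2) a, Real.sqrt q ≤ f x := by
    intro x hx
    have hx0 : (0:ℝ) ≤ x := le_trans (by linarith) hx.1
    apply Real.sqrt_le_sqrt
    have hnum : a / 4 * Real.log (1 + a / 4) ≤ (1 + x) * Real.log (1 + x) - x := by
      calc a / 4 * Real.log (1 + a / 4)
          ≤ x / 2 * Real.log (1 + x / 2) :=
            mul_le_mul (by linarith [hx.1]) (Real.log_le_log (by linarith)
              (by linarith [hx.1])) (Real.log_nonneg (by linarith)) (by linarith)
        _ ≤ _ := entropy_lb x hx0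
    exact div_le_div₀ (le_trans hNnn hnum) hnum (by linarith) (by linarith [hx.2])
  -- lower bound for the integral over [a/2, a]
  have hI2 : a / 2 * Real.sqrt q ≤ ∫ s in (a/2)..a, f s := by
    have := integral_mono_on (f := fun _ => Real.sqrt q) (g := f)
      (a := a/2) (b := a) (μ := MeasureTheory.volume)
      (by linarith) intervalIntegrable_const hint2 hlow
    rw [integral_const] at this
    calc a / 2 * Real.sqrt q = (a - a / 2) • Real.sqrt q := by
          simp only [smul_eq_mul]; ring
      _ ≤ _ := this
  have hI1 : (0:ℝ) ≤ ∫ s in (0:ℝ)..(a/2), f s := by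
    apply integral_nonneg (by linarith)
    intro x _; exact Real.sqrt_nonneg _
  have hsplit : (∫ s in (0:ℝ)..a, f s) = (∫ s in (0:ℝ)..(a/2), f s) + ∫ s in (a/2)..a, f s :=
    (integral_add_adjacent_intervals hint1 hint2).symm
  have hPsi : a / 2 * Real.sqrt q ≤ ∫ s in (0:ℝ)..a, f s := by
    rw [hsplit]; linarith
  have hPsinn : 0 ≤ ∫ s in (0:ℝ)..a, f s :=
    le_trans (mul_nonneg (by linarith) (Real.sqrt_nonneg _)) hPsi
  refine ⟨hPsinn, ?_⟩
  have hsq : (a / 2 * Real.sqrt q) ^ 2 ≤ (∫ s in (0:ℝ)..a, f s) ^ 2 :=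
    pow_le_pow_left₀ (mul_nonneg (by linarith) (Real.sqrt_nonneg _)) hPsi 2
  have hsqval : (a / 2 * Real.sqrt q) ^ 2 = a ^ 2 / 4 * q := by
    rw [mul_pow, Real.sq_sqrt hqnn]; ring
  -- log(1+a) ≤ 4 log(1+a/4)
  have hlog4 : Real.log (1 + a) ≤ 4 * Real.log (1 + a / 4) := by
    have h1 : (1:ℝ) + a ≤ (1 + a / 4) ^ 4 := by nlinarith [sq_nonneg a, sq_nonneg (a*a)]
    calc Real.log (1 + a) ≤ Real.log ((1 + a / 4) ^ 4) :=
          Real.log_le_log (by linarith) h1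
      _ = 4 * Real.log (1 + a / 4) := by
          rw [Real.log_pow]; norm_num
  have hqval : a ^ 2 / 4 * q = a ^ 3 * Real.log (1 + a / 4) / (16 * (1 + a)) := by
    rw [hq]; field_simp; ring
  have hfin : a ^ 3 * Real.log (1 + a) ≤ 64 * (1 + a) * (a ^ 2 / 4 * q) := by
    rw [hqval]
    have h1a : (0:ℝ) < 1 + a := by linarith
    have : 64 * (1 + a) * (a ^ 3 * Real.log (1 + a / 4) / (16 * (1 + a)))
        = 4 * (a ^ 3 * Real.log (1 + a / 4)) := by field_simp; ring
    rw [this]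
    nlinarith [pow_nonneg ha 3]
  calc a ^ 3 * Real.log (1 + a) ≤ 64 * (1 + a) * (a ^ 2 / 4 * q) := hfin
    _ = 64 * (1 + a) * ((a / 2 * Real.sqrt q) ^ 2) := by rw [hsqval]
    _ ≤ _ := by
        apply mul_le_mul_of_nonneg_left hsq (by linarith)

theorem g_log_le_Psi_sq :
    ∃ C : ℝ, 0 < C ∧ ∀ a : ℝ, 0 ≤ a →
      (if a ≤ 1 then a ^ 3 else a ^ 2) * Real.log (1 + a)
        ≤ C * |∫ s in (0:ℝ)..a,
            Real.sqrt (((1 + s) * Real.log (1 + s) - s) / (1 + s))| ^ 2 := by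
  refine ⟨128, by norm_num, fun a ha => ?_⟩
  obtain ⟨hnn, hkey⟩ := key_bound a ha
  rw [abs_of_nonneg hnn]
  set P : ℝ := ∫ s in (0:ℝ)..a, Real.sqrt (((1 + s) * Real.log (1 + s) - s) / (1 + s))
  have hP2 : 0 ≤ P ^ 2 := sq_nonneg P
  have hlognn : 0 ≤ Real.log (1 + a) := Real.log_nonneg (by linarith)
  split_ifs with h
  · -- a ≤ 1 : 64*(1+a) ≤ 128
    nlinarith
  · -- a > 1 : a^2*(1+a)*log ≤ 2*a^3*log ≤ 128*(1+a)*P^2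
    push_neg at h
    have h1 : a ^ 2 * (1 + a) ≤ 2 * a ^ 3 := by nlinarith
    have h2 : a ^ 2 * (1 + a) * Real.log (1 + a) ≤ 128 * (1 + a) * P ^ 2 := by
      nlinarith [mul_le_mul_of_nonneg_right h1 hlognn]
    have h1a : (0:ℝ) < 1 + a := by linarith
    nlinarith
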